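/- Let d ≥ 1 and r > 0. Let ν₁, ν₂ be finite nonnegative Borel measures on 𝕋^d, and let {y_m}_{m=1}^M ⊂ 𝕋^d be points such that 𝕋^d ⊆ ∪_{m=1}^M B_r(y_m). Let g : 𝕋^d → ℝ be Lipschitz with a continuous r-local Lipschitz modulus h : 𝕋^d → [0,∞). Then ‖g ∗ ν₁ − g ∗ ν₂‖_{L^∞(𝕋^d)} ≤ 2r ‖h ∗ ν₁‖_{L^∞(𝕋^d)} + sup_{1≤m≤M} |g ∗ ν₁(y_m) − g ∗ ν₂(y_m)| + r · sup_{1≤m≤M} |h ∗ ν₁(y_m) − h ∗ ν₂(y_m)|. -/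

import Mathlib

open MeasureTheory Real Set
open scoped ENNReal BigOperators

noncomputable section

/-- Euclidean space ℝ^d. Points of the flat torus 𝕋^d = ℝ^d/ℤ^d are modelled by
representatives in ℝ^d, and functions on 𝕋^d by ℤ^d-periodic functions on ℝ^d. -/
abbrev E (d : ℕ) := EuclideanSpace ℝ (Fin d)

/-- The lattice vector of ℤ^d associated to `k`. -/
def latVec (d : ℕ) (k : Fin d → ℤ) : E d := WithLp.toLp 2 (fun i => (k i : ℝ))

/-- The torus "norm" |x|_{𝕋^d} = inf_{k ∈ ℤ^d} |x + k|. -/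
def tnorm (d : ℕ) (x : E d) : ℝ := ⨅ k : Fin d → ℤ, ‖x + latVec d k‖

/-- ℤ^d-periodicity: `f` descends to a function on the torus 𝕋^d. -/
def TPer {d : ℕ} {α : Type*} (f : E d → α) : Prop :=
  ∀ (x : E d) (k : Fin d → ℤ), f (x + latVec d k) = f x

/-- The fundamental domain [-1/2, 1/2)^d of the torus. -/
def fundDom (d : ℕ) : Set (E d) := {x | ∀ i, x i ∈ Set.Ico (-(1/2) : ℝ) (1/2)}

/-- Supremum of a real-valued function over a set. -/
def supOn {d : ℕ} (s : Set (E d)) (f : E d → ℝ) : ℝ := sSup (f '' s)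

/-- g is Lipschitz continuous on the torus. -/
def TLip {d : ℕ} (g : E d → ℝ) : Prop :=
  ∃ C : ℝ, ∀ x y : E d, |g x - g y| ≤ C * tnorm d (x - y)

/-- h is an r-local Lipschitz modulus for g:
|g(x) − g(y)| ≤ h(y)·|x−y|_{𝕋^d} whenever |x−y|_{𝕋^d} < r. -/
def IsLocMod (d : ℕ) (r : ℝ) (g h : E d → ℝ) : Prop :=
  ∀ x y : E d, tnorm d (x - y) < r → |g x - g y| ≤ h y * tnorm d (x - y)

/-- Convolution of a function on the torus with a finite measure:
(g ∗ ν)(y) := ∫ g(y−y') dν(y'). -/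
def convM (d : ℕ) (g : E d → ℝ) (ν : Measure (E d)) (y : E d) : ℝ :=
  ∫ y', g (y - y') ∂ν

lemma tnorm_nonneg (d : ℕ) (x : E d) : 0 ≤ tnorm d x :=
  Real.iInf_nonneg fun _ => norm_nonneg _

lemma tnorm_le_norm (d : ℕ) (x : E d) : tnorm d x ≤ ‖x‖ := by
  have h0 : latVec d 0 = 0 := by ext i; simp [latVec]
  have := ciInf_le (f := fun k => ‖x + latVec d k‖)
    ⟨0, by rintro v ⟨k, rfl⟩; exact norm_nonneg _⟩ 0
  simpa [h0, tnorm] using this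

lemma per_bounded {d : ℕ} {f : E d → ℝ} (hf : Continuous f) (hper : TPer f) :
    ∃ C : ℝ, 0 ≤ C ∧ ∀ x, |f x| ≤ C := by
  have hK : IsCompact (Metric.closedBall (0 : E d) (d + 1)) := isCompact_closedBall _ _
  have hne : (Metric.closedBall (0 : E d) (d + 1)).Nonempty :=
    ⟨0, by simp; positivity⟩
  obtain ⟨x₀, -, hx₀⟩ := hK.exists_isMaxOn hne ((continuous_abs.comp hf).continuousOn)
  refine ⟨|f x₀|, abs_nonneg _, fun x => ?_⟩
  set k : Fin d → ℤ := fun i => -⌊x i⌋ with hk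
  have hz : ∀ i, |(x + latVec d k) i| ≤ 1 := by
    intro i
    have : (x + latVec d k) i = Int.fract (x i) := by
      have h1 : (x + latVec d k) i = x i + ((-⌊x i⌋ : ℤ) : ℝ) := by simp [latVec, hk]
      rw [h1, Int.fract]; push_cast; ring
    rw [this, abs_of_nonneg (Int.fract_nonneg _)]
    exact (Int.fract_lt_one _).le
  have hnorm : ‖x + latVec d k‖ ≤ d + 1 := by
    rw [EuclideanSpace.norm_eq]
    have : Real.sqrt (∑ i, ‖(x + latVec d k) i‖ ^ 2) ≤ Real.sqrt d := by
      apply Real.sqrt_le_sqrt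
      calc ∑ i, ‖(x + latVec d k) i‖ ^ 2 ≤ ∑ _i : Fin d, (1:ℝ) := by
            apply Finset.sum_le_sum
            intro i _
            have := hz i
            have : ‖(x + latVec d k) i‖ ≤ 1 := by simpa using this
            nlinarith [norm_nonneg ((x + latVec d k) i)]
        _ = d := by simp
    refine this.trans ?_
    have : Real.sqrt d ≤ Real.sqrt ((d+1)^2) := by
      apply Real.sqrt_le_sqrt; nlinarith [Nat.cast_nonneg (α := ℝ) d]
    simpa [Real.sqrt_sq (by positivity : (0:ℝ) ≤ (d:ℝ)+1)] using this
  have := hx₀ (Metric.mem_closedBall.2 (by simpa using hnorm))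
  calc |f x| = |f (x + latVec d k)| := by rw [hper x k]
    _ ≤ |f x₀| := this

lemma conv_integrable {d : ℕ} {f : E d → ℝ} {C : ℝ} (hf : Continuous f)
    (hb : ∀ x, |f x| ≤ C) (ν : Measure (E d)) [IsFiniteMeasure ν] (z : E d) :
    Integrable (fun y' => f (z - y')) ν := by
  have hc : Continuous fun y' : E d => f (z - y') :=
    hf.comp (continuous_const.sub continuous_id)
  exact (integrable_const C).mono' hc.aestronglyMeasurable
    (ae_of_all _ fun y' => by simpa using hb (z - y'))


lemma conv_nonneg {d : ℕ} {h : E d → ℝ} (hh0 : ∀ x, 0 ≤ h x) (ν : Measure (E d)) (z : E d) :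
    0 ≤ convM d h ν z :=
  integral_nonneg fun _ => hh0 _

/-- Reduction of L^∞ convergence of convolutions to a finite mesh:
‖g∗ν₁ − g∗ν₂‖_{L^∞} ≤ 2r ‖h∗ν₁‖_{L^∞} + sup_m |g∗ν₁(y_m) − g∗ν₂(y_m)|
+ r sup_m |h∗ν₁(y_m) − h∗ν₂(y_m)|.  (For continuous periodic data the L^∞ norms
coincide with pointwise suprema.) -/
theorem stmt_9 (d M : ℕ) (hd : 1 ≤ d) (r : ℝ) (hr : 0 < r)
    (ν₁ ν₂ : Measure (E d)) (hν₁ : IsFiniteMeasure ν₁) (hν₂ : IsFiniteMeasure ν₂)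
    (ym : Fin M → E d) (hcover : ∀ x : E d, ∃ m, tnorm d (x - ym m) < r)
    (g h : E d → ℝ) (hgper : TPer g) (hgLip : TLip g)
    (hhper : TPer h) (hh0 : ∀ x, 0 ≤ h x) (hhc : Continuous h)
    (hmod : IsLocMod d r g h) :
    ∀ y : E d,
      |convM d g ν₁ y - convM d g ν₂ y|
        ≤ 2 * r * (⨆ x : E d, convM d h ν₁ x)
          + (⨆ m, |convM d g ν₁ (ym m) - convM d g ν₂ (ym m)|)
          + r * (⨆ m, |convM d h ν₁ (ym m) - convM d h ν₂ (ym m)|) := by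
  haveI := hν₁; haveI := hν₂
  -- continuity of g
  obtain ⟨Cg0, hCg0⟩ := hgLip
  have hgc : Continuous g := by
    refine (LipschitzWith.of_dist_le_mul (K := ⟨|Cg0|, abs_nonneg _⟩) ?_).continuous
    intro x y
    calc dist (g x) (g y) = |g x - g y| := Real.dist_eq _ _
      _ ≤ Cg0 * tnorm d (x - y) := hCg0 x y
      _ ≤ |Cg0| * tnorm d (x - y) :=
          mul_le_mul_of_nonneg_right (le_abs_self _) (tnorm_nonneg _ _)
      _ ≤ |Cg0| * ‖x - y‖ :=
          mul_le_mul_of_nonneg_left (tnorm_le_norm _ _) (abs_nonneg _)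
      _ = |Cg0| * dist x y := by rw [dist_eq_norm]
  obtain ⟨Cg, hCg0', hCg⟩ := per_bounded hgc hgper
  obtain ⟨Ch, hCh0, hCh⟩ := per_bounded hhc hhper
  -- key estimate
  have key : ∀ (ν : Measure (E d)) [IsFiniteMeasure ν], ∀ y z : E d,
      tnorm d (y - z) < r →
      |convM d g ν y - convM d g ν z| ≤ tnorm d (y - z) * convM d h ν z := by
    intro ν _ y z hyz
    have h1 : convM d g ν y - convM d g ν z = ∫ y', (g (y - y') - g (z - y')) ∂ν :=
      (integral_sub (conv_integrable hgc hCg ν y) (conv_integrable hgc hCg ν z)).symm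
    rw [h1]
    calc |∫ y', (g (y - y') - g (z - y')) ∂ν|
        ≤ ∫ y', |g (y - y') - g (z - y')| ∂ν := by
          simpa using norm_integral_le_integral_norm (fun y' => g (y - y') - g (z - y'))
      _ ≤ ∫ y', h (z - y') * tnorm d (y - z) ∂ν := by
          refine integral_mono
            ((conv_integrable hgc hCg ν y).sub (conv_integrable hgc hCg ν z)).abs
            ((conv_integrable hhc hCh ν z).mul_const _) (fun y' => ?_)
          have := hmod (y - y') (z - y') (by rwa [sub_sub_sub_cancel_right])
          rwa [sub_sub_sub_cancel_right] at this
      _ = tnorm d (y - z) * convM d h ν z := by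
          rw [MeasureTheory.integral_mul_const]; exact mul_comm _ _
  -- bddAbove of the sup over x
  have hbdd : BddAbove (Set.range fun x => convM d h ν₁ x) := by
    refine ⟨(ν₁ Set.univ).toReal * Ch, ?_⟩
    rintro v ⟨x, rfl⟩
    calc convM d h ν₁ x ≤ ∫ _y', Ch ∂ν₁ :=
          integral_mono (conv_integrable hhc hCh ν₁ x) (integrable_const _)
            (fun y' => (le_abs_self _).trans (hCh _))
      _ = (ν₁ Set.univ).toReal * Ch := by simp [integral_const, smul_eq_mul, Measure.real]
  intro y
  obtain ⟨m, hm⟩ := hcover y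
  haveI : Nonempty (Fin M) := ⟨m⟩
  have A1 : |convM d g ν₁ y - convM d g ν₁ (ym m)| ≤ r * convM d h ν₁ (ym m) :=
    (key ν₁ y (ym m) hm).trans
      (mul_le_mul_of_nonneg_right hm.le (conv_nonneg hh0 ν₁ (ym m)))
  have A3 : |convM d g ν₂ (ym m) - convM d g ν₂ y| ≤ r * convM d h ν₂ (ym m) := by
    rw [abs_sub_comm]
    exact (key ν₂ y (ym m) hm).trans
      (mul_le_mul_of_nonneg_right hm.le (conv_nonneg hh0 ν₂ (ym m)))
  have hS : convM d h ν₁ (ym m) ≤ ⨆ x : E d, convM d h ν₁ x := le_ciSup hbdd (ym m)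
  have hG : |convM d g ν₁ (ym m) - convM d g ν₂ (ym m)|
      ≤ ⨆ m, |convM d g ν₁ (ym m) - convM d g ν₂ (ym m)| :=
    le_ciSup (f := fun m => |convM d g ν₁ (ym m) - convM d g ν₂ (ym m)|)
      (Set.Finite.bddAbove (Set.finite_range _)) m
  have hH : |convM d h ν₁ (ym m) - convM d h ν₂ (ym m)|
      ≤ ⨆ m, |convM d h ν₁ (ym m) - convM d h ν₂ (ym m)| :=
    le_ciSup (f := fun m => |convM d h ν₁ (ym m) - convM d h ν₂ (ym m)|)
      (Set.Finite.bddAbove (Set.finite_range _)) m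
  have h2 : convM d h ν₂ (ym m) ≤ convM d h ν₁ (ym m) + |convM d h ν₁ (ym m) - convM d h ν₂ (ym m)| := by
    have := neg_abs_le (convM d h ν₁ (ym m) - convM d h ν₂ (ym m))
    linarith
  have tri : |convM d g ν₁ y - convM d g ν₂ y|
      ≤ |convM d g ν₁ y - convM d g ν₁ (ym m)| + |convM d g ν₁ (ym m) - convM d g ν₂ (ym m)|
        + |convM d g ν₂ (ym m) - convM d g ν₂ y| := by
    calc |convM d g ν₁ y - convM d g ν₂ y|
        ≤ |convM d g ν₁ y - convM d g ν₂ (ym m)| + |convM d g ν₂ (ym m) - convM d g ν₂ y| :=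
          abs_sub_le _ _ _
      _ ≤ |convM d g ν₁ y - convM d g ν₁ (ym m)| + |convM d g ν₁ (ym m) - convM d g ν₂ (ym m)|
          + |convM d g ν₂ (ym m) - convM d g ν₂ y| := by
          have := abs_sub_le (convM d g ν₁ y) (convM d g ν₁ (ym m)) (convM d g ν₂ (ym m))
          linarith
  have m1 : r * convM d h ν₁ (ym m) ≤ r * (⨆ x : E d, convM d h ν₁ x) :=
    mul_le_mul_of_nonneg_left hS hr.le
  have m2 : r * convM d h ν₂ (ym m)
      ≤ r * ((⨆ x : E d, convM d h ν₁ x)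
          + (⨆ m, |convM d h ν₁ (ym m) - convM d h ν₂ (ym m)|)) := by
    refine mul_le_mul_of_nonneg_left ?_ hr.le
    calc convM d h ν₂ (ym m) ≤ convM d h ν₁ (ym m) + |convM d h ν₁ (ym m) - convM d h ν₂ (ym m)| := h2
      _ ≤ _ := add_le_add hS hH
  nlinarith [tri, A1, A3, hG, m1, m2]
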